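/- Let $d \ge 1$, $p \in (1,\infty)$, and let $\Omega \subseteq \mathbb{R}^d$ be open. Let $(\nu_\varepsilon)_{\varepsilon \in (0,1)}$ be a $p$-Lévy approximation of the unity. Let $(u_\varepsilon)_{\varepsilon \in (0,1)}$ be measurable functions $\mathbb{R}^d \to \mathbb{R}$ with $\sup_{\varepsilon \in (0,1)} \int_{\Omega}\int_{\Omega^c} |u_\varepsilon(x) - u_\varepsilon(y)|^p\, \nu_\varepsilon(x-y)\,dy\,dx < \infty$, and let $v : \mathbb{R}^d \to \mathbb{R}$ be a bounded measurable function whose support is a compact subset of $\Omega$. Then, as $\varepsilon \to 0^+$, both $\int_{\Omega}\int_{\Omega^c} |u_\varepsilon(x)-u_\varepsilon(y)|^{p-2}(u_\varepsilon(x)-u_\varepsilon(y))\,(v(x)-v(y))\,\nu_\varepsilon(x-y)\,dy\,dx \to 0$ and $\int_{\Omega}\int_{\Omega^c} |v(x)-v(y)|^{p-2}(v(x)-v(y))\,(u_\varepsilon(x)-u_\varepsilon(y))\,\nu_\varepsilon(x-y)\,dy\,dx \to 0$ (for each $\varepsilon$ these integrands are integrable on $\Omega \times \Omega^c$). -/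

import Mathlib

open MeasureTheory Filter
open scoped ENNReal Topology

/-- A family `(ν_ε)_{ε∈(0,1)}` of measurable functions `ℝ^d → [0,∞)` is a `p`-Lévy
approximation of the unity: each `ν_ε` is radial with
`∫ (1 ∧ |h|^p) ν_ε(h) dh = 1`, and for every `δ > 0`,
`∫_{|h|>δ} ν_ε(h) dh → 0` as `ε → 0⁺`. -/
def IsPLevyApproxUnity (d : ℕ) (p : ℝ)
    (ν : ℝ → EuclideanSpace ℝ (Fin d) → ℝ) : Prop :=
  (∀ ε ∈ Set.Ioo (0 : ℝ) 1,
    Measurable (ν ε) ∧ (∀ h, 0 ≤ ν ε h) ∧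
    (∀ h h' : EuclideanSpace ℝ (Fin d), ‖h‖ = ‖h'‖ → ν ε h = ν ε h') ∧
    ∫⁻ h : EuclideanSpace ℝ (Fin d), ENNReal.ofReal (min 1 (‖h‖ ^ p) * ν ε h) = 1) ∧
  (∀ δ : ℝ, 0 < δ →
    Tendsto (fun ε => ∫⁻ h in {h : EuclideanSpace ℝ (Fin d) | δ < ‖h‖},
        ENNReal.ofReal (ν ε h))
      (𝓝[>] (0 : ℝ)) (𝓝 0))

lemma rpow_collapse {t : ℝ} (ht : 0 < t) (p : ℝ) : t ^ (p - 2) * t = t ^ (p - 1) := by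
  calc t ^ (p - 2) * t = t ^ (p - 2) * t ^ (1 : ℝ) := by rw [Real.rpow_one]
    _ = t ^ (p - 2 + 1) := (Real.rpow_add ht _ _).symm
    _ = t ^ (p - 1) := by congr 1; ring

lemma holder_aux {α : Type*} [MeasurableSpace α] (μ : Measure α) {p θ : ℝ}
    (hθ : 0 < θ) (hθp : θ < p)
    {a w : α → ℝ≥0∞} (ha : Measurable a) (hw : Measurable w)
    {s : Set α} (hs : MeasurableSet s) :
    ∫⁻ x, a x ^ θ * w x * s.indicator 1 x ∂μ ≤
      (∫⁻ x, a x ^ p * w x ∂μ) ^ (θ / p) *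
        (∫⁻ x, w x * s.indicator 1 x ∂μ) ^ ((p - θ) / p) := by
  have hp0 : 0 < p := hθ.trans hθp
  have hθp' : (0:ℝ) < p - θ := by linarith
  have hconj : (p / θ).HolderConjugate (p / (p - θ)) := by
    constructor
    · rw [inv_div, inv_div, inv_one, ← add_div, add_sub_cancel, div_self hp0.ne']
    · exact div_pos hp0 hθ
    · exact div_pos hp0 hθp'
  have hF : Measurable fun x => a x ^ θ * w x ^ (θ / p) :=
    (ha.pow_const θ).mul (hw.pow_const (θ / p))
  have hG : Measurable fun x => w x ^ ((p - θ) / p) * s.indicator 1 x :=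
    (hw.pow_const ((p - θ) / p)).mul (measurable_one.indicator hs)
  have key := ENNReal.lintegral_mul_le_Lp_mul_Lq μ hconj hF.aemeasurable hG.aemeasurable
  have e1 : ∀ x, (fun x => a x ^ θ * w x ^ (θ / p)) x *
      (fun x => w x ^ ((p - θ) / p) * s.indicator 1 x) x
      = a x ^ θ * w x * s.indicator 1 x := by
    intro x
    have : w x ^ (θ / p) * w x ^ ((p - θ) / p) = w x := by
      rw [← ENNReal.rpow_add_of_nonneg _ _ (by positivity) (by positivity)]
      have : θ / p + (p - θ) / p = 1 := by field_simp; ring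
      rw [this, ENNReal.rpow_one]
    calc a x ^ θ * w x ^ (θ / p) * (w x ^ ((p - θ) / p) * s.indicator 1 x)
        = a x ^ θ * (w x ^ (θ / p) * w x ^ ((p - θ) / p)) * s.indicator 1 x := by ring
      _ = a x ^ θ * w x * s.indicator 1 x := by rw [this]
  have e2 : ∀ x, (a x ^ θ * w x ^ (θ / p)) ^ (p / θ) = a x ^ p * w x := by
    intro x
    rw [ENNReal.mul_rpow_of_nonneg _ _ (by positivity), ← ENNReal.rpow_mul, ← ENNReal.rpow_mul]
    congr 1
    · congr 1; field_simp
    · rw [show θ / p * (p / θ) = 1 by field_simp, ENNReal.rpow_one]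
  have e3 : ∀ x, (w x ^ ((p - θ) / p) * s.indicator 1 x) ^ (p / (p - θ))
      = w x * s.indicator 1 x := by
    intro x
    rw [ENNReal.mul_rpow_of_nonneg _ _ (by positivity), ← ENNReal.rpow_mul]
    congr 1
    · rw [show (p - θ) / p * (p / (p - θ)) = 1 by field_simp, ENNReal.rpow_one]
    · by_cases hx : x ∈ s
      · simp [hx]
      · simp [hx, ENNReal.zero_rpow_of_pos (by positivity : (0:ℝ) < p / (p - θ))]
  have d1 : 1 / (p / θ) = θ / p := by field_simp
  have d2 : 1 / (p / (p - θ)) = (p - θ) / p := by field_simp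
  calc ∫⁻ x, a x ^ θ * w x * s.indicator 1 x ∂μ
      = ∫⁻ x, (fun x => a x ^ θ * w x ^ (θ / p)) x *
          (fun x => w x ^ ((p - θ) / p) * s.indicator 1 x) x ∂μ :=
        (lintegral_congr fun x => e1 x).symm
    _ ≤ (∫⁻ x, (a x ^ θ * w x ^ (θ / p)) ^ (p / θ) ∂μ) ^ (1 / (p / θ)) *
        (∫⁻ x, (w x ^ ((p - θ) / p) * s.indicator 1 x) ^ (p / (p - θ)) ∂μ) ^
          (1 / (p / (p - θ))) := key
    _ = (∫⁻ x, a x ^ p * w x ∂μ) ^ (θ / p) *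
        (∫⁻ x, w x * s.indicator 1 x ∂μ) ^ ((p - θ) / p) := by
        rw [lintegral_congr e2, lintegral_congr e3, d1, d2]

lemma core_aux {G : Type*} [NormedAddCommGroup G] [MeasureSpace G] [BorelSpace G]
    [SecondCountableTopology G] [volume.IsAddLeftInvariant (G := G)]
    [volume.IsNegInvariant (G := G)] [SigmaFinite (volume : Measure G)]
    [IsFiniteMeasureOnCompacts (volume : Measure G)] {p : ℝ} (hp : 1 < p)
    {Ω : Set (G)} (hΩ : IsOpen Ω)
    {ν : ℝ → G → ℝ}
    {uf : ℝ → G → ℝ}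
    (huf : ∀ ε ∈ Set.Ioo (0:ℝ) 1, Measurable (uf ε))
    (hνm : ∀ ε ∈ Set.Ioo (0:ℝ) 1, Measurable (ν ε))
    {C : ℝ≥0∞} (hC : C ≠ ⊤)
    (hCb : ∀ ε ∈ Set.Ioo (0:ℝ) 1, ∫⁻ z in Ω ×ˢ Ωᶜ,
      ENNReal.ofReal (|uf ε z.1 - uf ε z.2| ^ p * ν ε (z.1 - z.2)) ≤ C)
    {K : Set (G)} (hKc : IsCompact K)
    {δ' : ℝ} (hδ' : 0 < δ')
    (hT0 : Tendsto (fun ε => ∫⁻ h in {h : G | δ' < ‖h‖},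
      ENNReal.ofReal (ν ε h)) (𝓝[>] (0:ℝ)) (𝓝 0))
    (hTfin : ∀ ε ∈ Set.Ioo (0:ℝ) 1,
      (∫⁻ h in {h : G | δ' < ‖h‖}, ENNReal.ofReal (ν ε h)) ≠ ⊤)
    {θ : ℝ} (hθ : 0 < θ) (hθp : θ < p)
    {c0 : ℝ≥0∞} (hc0 : c0 ≠ ⊤)
    {f : ℝ → (G × G) → ℝ}
    (hfm : ∀ ε ∈ Set.Ioo (0:ℝ) 1, Measurable (f ε))
    (hfb : ∀ ε ∈ Set.Ioo (0:ℝ) 1, ∀ z ∈ Ω ×ˢ Ωᶜ, ENNReal.ofReal ‖f ε z‖ ≤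
        c0 * ((ENNReal.ofReal |uf ε z.1 - uf ε z.2|) ^ θ *
          ENNReal.ofReal (ν ε (z.1 - z.2)) *
          ({z : G × G |
            z.1 ∈ K ∧ δ' < ‖z.1 - z.2‖}).indicator 1 z)) :
    (∀ ε ∈ Set.Ioo (0:ℝ) 1, IntegrableOn (f ε) (Ω ×ˢ Ωᶜ)) ∧
      Tendsto (fun ε => ∫ z in Ω ×ˢ Ωᶜ, f ε z) (𝓝[>] (0:ℝ)) (𝓝 0) := by
  have hp0 : (0:ℝ) < p := lt_trans one_pos hp
  set Q : Set (G × G) := Ω ×ˢ Ωᶜ with hQ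
  have hQm : MeasurableSet Q := (hΩ.measurableSet.prod hΩ.measurableSet.compl)
  set D : Set G := {h | δ' < ‖h‖} with hD
  have hDm : MeasurableSet D := measurableSet_lt measurable_const measurable_norm
  set S : Set (G × G) := {z | z.1 ∈ K ∧ δ' < ‖z.1 - z.2‖} with hS
  have hKm : MeasurableSet K := hKc.isClosed.measurableSet
  have hSm : MeasurableSet S := by
    have : S = (Prod.fst ⁻¹' K) ∩ {z : G × G | δ' < ‖z.1 - z.2‖} := rfl
    rw [this]
    exact (measurable_fst hKm).inter
      (measurableSet_lt measurable_const (measurable_fst.sub measurable_snd).norm)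
  set T : ℝ → ℝ≥0∞ := fun ε => ∫⁻ h in D, ENNReal.ofReal (ν ε h) with hTdef
  have hKvol : volume K ≠ ⊤ := hKc.measure_lt_top.ne
  set R : ℝ → ℝ≥0∞ := fun ε => c0 * C ^ (θ / p) * (volume K * T ε) ^ ((p - θ) / p) with hR
  have hRfin : ∀ ε ∈ Set.Ioo (0:ℝ) 1, R ε ≠ ⊤ := fun ε hε =>
    ENNReal.mul_ne_top
      (ENNReal.mul_ne_top hc0 (ENNReal.rpow_ne_top_of_nonneg (div_nonneg hθ.le hp0.le) hC))
      (ENNReal.rpow_ne_top_of_nonneg (div_nonneg (by linarith) hp0.le)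
        (ENNReal.mul_ne_top hKvol (hTfin ε hε)))
  have main : ∀ ε ∈ Set.Ioo (0:ℝ) 1,
      (∫⁻ z in Q, ENNReal.ofReal ‖f ε z‖) ≤ R ε := by
    intro ε hε
    set a : G × G → ℝ≥0∞ := fun z => ENNReal.ofReal |uf ε z.1 - uf ε z.2| with ha
    set w : G × G → ℝ≥0∞ := fun z => ENNReal.ofReal (ν ε (z.1 - z.2)) with hw
    have ham : Measurable a :=
      (((huf ε hε).comp measurable_fst).sub ((huf ε hε).comp measurable_snd)).abs.ennreal_ofReal
    have hwm : Measurable w :=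
      ((hνm ε hε).comp (measurable_fst.sub measurable_snd)).ennreal_ofReal
    have hA : (∫⁻ z in Q, a z ^ p * w z) ≤ C := by
      refine le_trans (le_of_eq ?_) (hCb ε hε)
      refine lintegral_congr fun z => ?_
      rw [ENNReal.ofReal_mul (by positivity), ENNReal.ofReal_rpow_of_nonneg (abs_nonneg _) hp0.le]
    have hgm : Measurable (D.indicator fun h => ENNReal.ofReal (ν ε h)) :=
      ((hνm ε hε).ennreal_ofReal).indicator hDm
    have hB : (∫⁻ z in Q, w z * S.indicator 1 z) ≤ volume K * T ε := by
      calc ∫⁻ z in Q, w z * S.indicator 1 z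
          ≤ ∫⁻ z, w z * S.indicator 1 z := setLIntegral_le_lintegral _ _
        _ = ∫⁻ z : G × G, K.indicator 1 z.1 *
              (D.indicator fun h => ENNReal.ofReal (ν ε h)) (z.1 - z.2) := by
            refine lintegral_congr fun z => ?_
            by_cases h1 : z.1 ∈ K <;> by_cases h2 : δ' < ‖z.1 - z.2‖ <;>
              simp [hS, hw, hD, Set.indicator_apply, h1, h2]
        _ = ∫⁻ x : G, ∫⁻ y : G, K.indicator 1 x *
              (D.indicator fun h => ENNReal.ofReal (ν ε h)) (x - y) := by
            rw [MeasureTheory.Measure.volume_eq_prod, lintegral_prod]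
            exact (((measurable_one.indicator hKm).comp measurable_fst).mul
              (hgm.comp (measurable_fst.sub measurable_snd))).aemeasurable
        _ = ∫⁻ x : G, K.indicator 1 x * T ε := by
            refine lintegral_congr fun x => ?_
            have hm' : Measurable fun y : G =>
                (D.indicator fun h => ENNReal.ofReal (ν ε h)) (x - y) :=
              hgm.comp (measurable_const.sub measurable_id)
            rw [lintegral_const_mul _ hm']
            congr 1
            calc ∫⁻ y, (D.indicator fun h => ENNReal.ofReal (ν ε h)) (x - y)
                = ∫⁻ h, (D.indicator fun h => ENNReal.ofReal (ν ε h)) h :=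
                  (Measure.measurePreserving_sub_left volume x).lintegral_comp hgm
              _ = T ε := lintegral_indicator hDm _
        _ = volume K * T ε := by
            have : ∀ x : G, K.indicator 1 x * T ε = K.indicator (fun _ => T ε) x := by
              intro x; by_cases hx : x ∈ K <;> simp [hx]
            rw [lintegral_congr this, lintegral_indicator hKm, setLIntegral_const, mul_comm]
    calc ∫⁻ z in Q, ENNReal.ofReal ‖f ε z‖
        ≤ ∫⁻ z in Q, c0 * (a z ^ θ * w z * S.indicator 1 z) :=
          setLIntegral_mono' hQm (hfb ε hε)
      _ = c0 * ∫⁻ z in Q, a z ^ θ * w z * S.indicator 1 z := by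
          rw [lintegral_const_mul]
          exact ((ham.pow_const θ).mul hwm).mul (measurable_one.indicator hSm)
      _ ≤ c0 * ((∫⁻ z in Q, a z ^ p * w z) ^ (θ / p) *
            (∫⁻ z in Q, w z * S.indicator 1 z) ^ ((p - θ) / p)) :=
          mul_le_mul_right (holder_aux _ hθ hθp ham hwm hSm) c0
      _ ≤ R ε := by
          show _ ≤ c0 * C ^ (θ / p) * (volume K * T ε) ^ ((p - θ) / p)
          rw [mul_assoc]
          refine mul_le_mul_right (mul_le_mul' ?_ ?_) c0
          · exact ENNReal.rpow_le_rpow hA (div_nonneg hθ.le hp0.le)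
          · exact ENNReal.rpow_le_rpow hB (div_nonneg (by linarith) hp0.le)
  constructor
  · intro ε hε
    refine ⟨(hfm ε hε).aestronglyMeasurable, ?_⟩
    rw [hasFiniteIntegral_iff_norm]
    exact lt_of_le_of_lt (main ε hε) (hRfin ε hε).lt_top
  · have hev : ∀ᶠ ε in 𝓝[>] (0:ℝ), ‖∫ z in Q, f ε z‖ ≤ (R ε).toReal := by
      filter_upwards [Ioo_mem_nhdsGT_of_mem (Set.mem_Ico.2 ⟨le_refl (0:ℝ), one_pos⟩)]
        with ε hε
      calc ‖∫ z in Q, f ε z‖ ≤ (∫⁻ z in Q, ENNReal.ofReal ‖f ε z‖).toReal :=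
            norm_integral_le_lintegral_norm _
        _ ≤ (R ε).toReal := ENNReal.toReal_mono (hRfin ε hε) (main ε hε)
    refine squeeze_zero_norm' hev ?_
    have h1 : Tendsto (fun ε => volume K * T ε) (𝓝[>] (0:ℝ)) (𝓝 0) := by
      have := ENNReal.Tendsto.const_mul hT0 (Or.inr hKvol)
      simpa using this
    have h2 : Tendsto (fun ε => (volume K * T ε) ^ ((p - θ) / p)) (𝓝[>] (0:ℝ)) (𝓝 0) := by
      have hc := (ENNReal.continuous_rpow_const (y := (p - θ) / p)).tendsto 0
      have := hc.comp h1
      simpa [Function.comp_def,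
        ENNReal.zero_rpow_of_pos (div_pos (by linarith : (0:ℝ) < p - θ) hp0)] using this
    have h3 : Tendsto R (𝓝[>] (0:ℝ)) (𝓝 0) := by
      have h := ENNReal.Tendsto.const_mul h2
        (Or.inr (ENNReal.mul_ne_top hc0
          (ENNReal.rpow_ne_top_of_nonneg (div_nonneg hθ.le hp0.le) hC)))
      rw [mul_zero] at h
      exact h
    have := (ENNReal.tendsto_toReal (by simp : (0:ℝ≥0∞) ≠ ⊤)).comp h3
    simpa [Function.comp_def] using this

/-- Collapse of the cross forms across the boundary: if
`sup_ε ∫_Ω∫_{Ω^c} |u_ε(x)-u_ε(y)|^p ν_ε(x-y) dy dx < ∞` and `v` is bounded measurable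
with compact support contained in the open set `Ω`, then both cross integrals
`∫_Ω∫_{Ω^c} |u_ε(x)-u_ε(y)|^{p-2}(u_ε(x)-u_ε(y))(v(x)-v(y)) ν_ε(x-y)` and
`∫_Ω∫_{Ω^c} |v(x)-v(y)|^{p-2}(v(x)-v(y))(u_ε(x)-u_ε(y)) ν_ε(x-y)` tend to `0`
as `ε → 0⁺`, the integrands being integrable on `Ω × Ω^c` for each `ε`. -/
theorem stmt_12 (d : ℕ) (hd : 1 ≤ d) (p : ℝ) (hp : 1 < p)
    (Ω : Set (EuclideanSpace ℝ (Fin d))) (hΩ : IsOpen Ω)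
    (ν : ℝ → EuclideanSpace ℝ (Fin d) → ℝ) (hν : IsPLevyApproxUnity d p ν)
    (uf : ℝ → EuclideanSpace ℝ (Fin d) → ℝ)
    (huf : ∀ ε ∈ Set.Ioo (0 : ℝ) 1, Measurable (uf ε))
    (hbdd : ∃ C : ℝ≥0∞, C ≠ ⊤ ∧ ∀ ε ∈ Set.Ioo (0 : ℝ) 1,
      ∫⁻ z in Ω ×ˢ Ωᶜ, ENNReal.ofReal (|uf ε z.1 - uf ε z.2| ^ p * ν ε (z.1 - z.2)) ≤ C)
    (v : EuclideanSpace ℝ (Fin d) → ℝ) (hv : Measurable v)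
    (M : ℝ) (hvM : ∀ x, |v x| ≤ M)
    (hvsupp : HasCompactSupport v) (hvΩ : tsupport v ⊆ Ω) :
    (∀ ε ∈ Set.Ioo (0 : ℝ) 1,
      IntegrableOn (fun z : EuclideanSpace ℝ (Fin d) × EuclideanSpace ℝ (Fin d) =>
        |uf ε z.1 - uf ε z.2| ^ (p - 2) * (uf ε z.1 - uf ε z.2) * (v z.1 - v z.2) *
          ν ε (z.1 - z.2)) (Ω ×ˢ Ωᶜ) ∧
      IntegrableOn (fun z : EuclideanSpace ℝ (Fin d) × EuclideanSpace ℝ (Fin d) =>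
        |v z.1 - v z.2| ^ (p - 2) * (v z.1 - v z.2) * (uf ε z.1 - uf ε z.2) *
          ν ε (z.1 - z.2)) (Ω ×ˢ Ωᶜ)) ∧
    Tendsto (fun ε => ∫ z in Ω ×ˢ Ωᶜ,
        |uf ε z.1 - uf ε z.2| ^ (p - 2) * (uf ε z.1 - uf ε z.2) * (v z.1 - v z.2) *
          ν ε (z.1 - z.2)) (𝓝[>] (0 : ℝ)) (𝓝 0) ∧
    Tendsto (fun ε => ∫ z in Ω ×ˢ Ωᶜ,
        |v z.1 - v z.2| ^ (p - 2) * (v z.1 - v z.2) * (uf ε z.1 - uf ε z.2) *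
          ν ε (z.1 - z.2)) (𝓝[>] (0 : ℝ)) (𝓝 0) := by
  obtain ⟨C, hC, hCb⟩ := hbdd
  obtain ⟨hν1, hν2⟩ := hν
  have hνm : ∀ ε ∈ Set.Ioo (0:ℝ) 1, Measurable (ν ε) := fun ε hε => (hν1 ε hε).1
  have hνnn : ∀ ε ∈ Set.Ioo (0:ℝ) 1, ∀ h, 0 ≤ ν ε h := fun ε hε => (hν1 ε hε).2.1
  have hνint : ∀ ε ∈ Set.Ioo (0:ℝ) 1,
      ∫⁻ h : EuclideanSpace ℝ (Fin d), ENNReal.ofReal (min 1 (‖h‖ ^ p) * ν ε h) = 1 :=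
    fun ε hε => (hν1 ε hε).2.2.2
  have hp0 : (0:ℝ) < p := lt_trans one_pos hp
  have hM : 0 ≤ M := le_trans (abs_nonneg _) (hvM 0)
  have hKc : IsCompact (tsupport v) := hvsupp
  obtain ⟨δ, hδ, hδK⟩ := hKc.exists_thickening_subset_open hΩ hvΩ
  have hδ' : (0:ℝ) < δ / 2 := by positivity
  have hT0 := hν2 (δ / 2) hδ'
  have hTfin : ∀ ε ∈ Set.Ioo (0:ℝ) 1,
      (∫⁻ h in {h : EuclideanSpace ℝ (Fin d) | δ / 2 < ‖h‖}, ENNReal.ofReal (ν ε h)) ≠ ⊤ := by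
    intro ε hε
    have hm := hνm ε hε
    have hnn := hνnn ε hε
    have hc0 : ENNReal.ofReal (min 1 ((δ / 2) ^ p)) ≠ 0 := by
      simp only [ne_eq, ENNReal.ofReal_eq_zero, not_le]
      exact lt_min one_pos (Real.rpow_pos_of_pos hδ' p)
    have hle : (∫⁻ h in {h : EuclideanSpace ℝ (Fin d) | δ / 2 < ‖h‖},
        ENNReal.ofReal (ν ε h)) ≤ (ENNReal.ofReal (min 1 ((δ / 2) ^ p)))⁻¹ := by
      rw [ENNReal.le_inv_iff_mul_le]
      calc (∫⁻ h in {h : EuclideanSpace ℝ (Fin d) | δ / 2 < ‖h‖}, ENNReal.ofReal (ν ε h)) *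
            ENNReal.ofReal (min 1 ((δ / 2) ^ p))
          = ∫⁻ h in {h : EuclideanSpace ℝ (Fin d) | δ / 2 < ‖h‖},
              ENNReal.ofReal (ν ε h) * ENNReal.ofReal (min 1 ((δ / 2) ^ p)) :=
            (lintegral_mul_const _ hm.ennreal_ofReal).symm
        _ ≤ ∫⁻ h in {h : EuclideanSpace ℝ (Fin d) | δ / 2 < ‖h‖},
              ENNReal.ofReal (min 1 (‖h‖ ^ p) * ν ε h) := by
            refine setLIntegral_mono' (measurableSet_lt measurable_const measurable_norm) ?_
            intro h hh
            rw [← ENNReal.ofReal_mul (hnn h)]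
            apply ENNReal.ofReal_le_ofReal
            rw [mul_comm]
            exact mul_le_mul_of_nonneg_right
              (min_le_min le_rfl (Real.rpow_le_rpow hδ'.le (le_of_lt hh) hp0.le)) (hnn h)
        _ ≤ ∫⁻ h, ENNReal.ofReal (min 1 (‖h‖ ^ p) * ν ε h) := setLIntegral_le_lintegral _ _
        _ = 1 := hνint ε hε
    exact ne_top_of_le_ne_top (ENNReal.inv_ne_top.2 hc0) hle
  have hgeom : ∀ z : EuclideanSpace ℝ (Fin d) × EuclideanSpace ℝ (Fin d),
      z.2 ∈ Ωᶜ → v z.1 ≠ 0 → z.1 ∈ tsupport v ∧ δ / 2 < ‖z.1 - z.2‖ := by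
    intro z hz2 hv1
    have h1 : z.1 ∈ tsupport v := subset_tsupport v hv1
    refine ⟨h1, ?_⟩
    have hdist : δ ≤ dist z.2 z.1 := by
      by_contra hlt
      push_neg at hlt
      exact hz2 (hδK (Metric.mem_thickening_iff.2 ⟨z.1, h1, hlt⟩))
    have hnorm : δ ≤ ‖z.1 - z.2‖ := by rwa [dist_comm, dist_eq_norm] at hdist
    linarith
  -- measurability of the two integrands
  have hfm1 : ∀ ε ∈ Set.Ioo (0:ℝ) 1, Measurable
      (fun z : EuclideanSpace ℝ (Fin d) × EuclideanSpace ℝ (Fin d) =>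
        |uf ε z.1 - uf ε z.2| ^ (p - 2) * (uf ε z.1 - uf ε z.2) * (v z.1 - v z.2) *
          ν ε (z.1 - z.2)) := by
    intro ε hε
    have hU : Measurable (fun z : EuclideanSpace ℝ (Fin d) × EuclideanSpace ℝ (Fin d) =>
        uf ε z.1 - uf ε z.2) :=
      ((huf ε hε).comp measurable_fst).sub ((huf ε hε).comp measurable_snd)
    exact (((hU.abs.pow measurable_const).mul hU).mul
        ((hv.comp measurable_fst).sub (hv.comp measurable_snd))).mul
      ((hνm ε hε).comp (measurable_fst.sub measurable_snd))
  have hfm2 : ∀ ε ∈ Set.Ioo (0:ℝ) 1, Measurable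
      (fun z : EuclideanSpace ℝ (Fin d) × EuclideanSpace ℝ (Fin d) =>
        |v z.1 - v z.2| ^ (p - 2) * (v z.1 - v z.2) * (uf ε z.1 - uf ε z.2) *
          ν ε (z.1 - z.2)) := by
    intro ε hε
    have hU : Measurable (fun z : EuclideanSpace ℝ (Fin d) × EuclideanSpace ℝ (Fin d) =>
        uf ε z.1 - uf ε z.2) :=
      ((huf ε hε).comp measurable_fst).sub ((huf ε hε).comp measurable_snd)
    have hV : Measurable (fun z : EuclideanSpace ℝ (Fin d) × EuclideanSpace ℝ (Fin d) =>
        v z.1 - v z.2) := (hv.comp measurable_fst).sub (hv.comp measurable_snd)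
    exact (((hV.abs.pow measurable_const).mul hV).mul hU).mul
      ((hνm ε hε).comp (measurable_fst.sub measurable_snd))
  -- pointwise bounds
  have hfb1 : ∀ ε ∈ Set.Ioo (0:ℝ) 1, ∀ z ∈ Ω ×ˢ Ωᶜ,
      ENNReal.ofReal ‖|uf ε z.1 - uf ε z.2| ^ (p - 2) * (uf ε z.1 - uf ε z.2) *
          (v z.1 - v z.2) * ν ε (z.1 - z.2)‖ ≤
        ENNReal.ofReal M * ((ENNReal.ofReal |uf ε z.1 - uf ε z.2|) ^ (p - 1) *
          ENNReal.ofReal (ν ε (z.1 - z.2)) *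
          ({z : EuclideanSpace ℝ (Fin d) × EuclideanSpace ℝ (Fin d) |
            z.1 ∈ tsupport v ∧ δ / 2 < ‖z.1 - z.2‖}).indicator 1 z) := by
    intro ε hε z hz
    have hz2 : z.2 ∈ Ωᶜ := hz.2
    have hv2 : v z.2 = 0 := image_eq_zero_of_notMem_tsupport fun hc => hz2 (hvΩ hc)
    by_cases hv1 : v z.1 = 0
    · simp only [hv1, hv2, sub_self, mul_zero, zero_mul, norm_zero, ENNReal.ofReal_zero]
      exact zero_le
    · obtain ⟨h1, h2⟩ := hgeom z hz2 hv1
      have hzS : z ∈ {z : EuclideanSpace ℝ (Fin d) × EuclideanSpace ℝ (Fin d) |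
          z.1 ∈ tsupport v ∧ δ / 2 < ‖z.1 - z.2‖} := ⟨h1, h2⟩
      rw [Set.indicator_of_mem hzS, Pi.one_apply, mul_one]
      have hn : 0 ≤ ν ε (z.1 - z.2) := hνnn ε hε _
      by_cases ht : uf ε z.1 - uf ε z.2 = 0
      · simp only [ht, mul_zero, zero_mul, norm_zero, ENNReal.ofReal_zero]
        exact zero_le
      · have htp : 0 < |uf ε z.1 - uf ε z.2| := abs_pos.2 ht
        have habs : ‖|uf ε z.1 - uf ε z.2| ^ (p - 2) * (uf ε z.1 - uf ε z.2) *
            (v z.1 - v z.2) * ν ε (z.1 - z.2)‖ =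
            |uf ε z.1 - uf ε z.2| ^ (p - 1) * |v z.1| * ν ε (z.1 - z.2) := by
          rw [hv2, sub_zero, Real.norm_eq_abs, abs_mul, abs_mul, abs_mul,
            abs_of_nonneg (Real.rpow_nonneg (abs_nonneg _) _), abs_of_nonneg hn,
            rpow_collapse htp]
        rw [habs]
        calc ENNReal.ofReal (|uf ε z.1 - uf ε z.2| ^ (p - 1) * |v z.1| * ν ε (z.1 - z.2))
            ≤ ENNReal.ofReal (M * (|uf ε z.1 - uf ε z.2| ^ (p - 1) * ν ε (z.1 - z.2))) := by
              apply ENNReal.ofReal_le_ofReal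
              have h1' : |uf ε z.1 - uf ε z.2| ^ (p - 1) * |v z.1| ≤
                  |uf ε z.1 - uf ε z.2| ^ (p - 1) * M :=
                mul_le_mul_of_nonneg_left (hvM z.1) (Real.rpow_nonneg (abs_nonneg _) _)
              calc |uf ε z.1 - uf ε z.2| ^ (p - 1) * |v z.1| * ν ε (z.1 - z.2)
                  ≤ |uf ε z.1 - uf ε z.2| ^ (p - 1) * M * ν ε (z.1 - z.2) :=
                    mul_le_mul_of_nonneg_right h1' hn
                _ = M * (|uf ε z.1 - uf ε z.2| ^ (p - 1) * ν ε (z.1 - z.2)) := by ring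
          _ = ENNReal.ofReal M * ((ENNReal.ofReal |uf ε z.1 - uf ε z.2|) ^ (p - 1) *
              ENNReal.ofReal (ν ε (z.1 - z.2))) := by
              rw [ENNReal.ofReal_mul hM,
                ENNReal.ofReal_mul (Real.rpow_nonneg (abs_nonneg _) _),
                ENNReal.ofReal_rpow_of_nonneg (abs_nonneg _) (by linarith : (0:ℝ) ≤ p - 1)]
  have hfb2 : ∀ ε ∈ Set.Ioo (0:ℝ) 1, ∀ z ∈ Ω ×ˢ Ωᶜ,
      ENNReal.ofReal ‖|v z.1 - v z.2| ^ (p - 2) * (v z.1 - v z.2) *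
          (uf ε z.1 - uf ε z.2) * ν ε (z.1 - z.2)‖ ≤
        ENNReal.ofReal (M ^ (p - 1)) * ((ENNReal.ofReal |uf ε z.1 - uf ε z.2|) ^ (1:ℝ) *
          ENNReal.ofReal (ν ε (z.1 - z.2)) *
          ({z : EuclideanSpace ℝ (Fin d) × EuclideanSpace ℝ (Fin d) |
            z.1 ∈ tsupport v ∧ δ / 2 < ‖z.1 - z.2‖}).indicator 1 z) := by
    intro ε hε z hz
    have hz2 : z.2 ∈ Ωᶜ := hz.2
    have hv2 : v z.2 = 0 := image_eq_zero_of_notMem_tsupport fun hc => hz2 (hvΩ hc)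
    by_cases hv1 : v z.1 = 0
    · simp only [hv1, hv2, sub_self, mul_zero, zero_mul, norm_zero, ENNReal.ofReal_zero]
      exact zero_le
    · obtain ⟨h1, h2⟩ := hgeom z hz2 hv1
      have hzS : z ∈ {z : EuclideanSpace ℝ (Fin d) × EuclideanSpace ℝ (Fin d) |
          z.1 ∈ tsupport v ∧ δ / 2 < ‖z.1 - z.2‖} := ⟨h1, h2⟩
      rw [Set.indicator_of_mem hzS, Pi.one_apply, mul_one, ENNReal.rpow_one]
      have hn : 0 ≤ ν ε (z.1 - z.2) := hνnn ε hε _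
      have hvp : 0 < |v z.1| := abs_pos.2 hv1
      have habs : ‖|v z.1 - v z.2| ^ (p - 2) * (v z.1 - v z.2) *
          (uf ε z.1 - uf ε z.2) * ν ε (z.1 - z.2)‖ =
          |v z.1| ^ (p - 1) * |uf ε z.1 - uf ε z.2| * ν ε (z.1 - z.2) := by
        rw [hv2, sub_zero, Real.norm_eq_abs, abs_mul, abs_mul, abs_mul,
          abs_of_nonneg (Real.rpow_nonneg (abs_nonneg _) _), abs_of_nonneg hn,
          rpow_collapse hvp]
      rw [habs]
      calc ENNReal.ofReal (|v z.1| ^ (p - 1) * |uf ε z.1 - uf ε z.2| * ν ε (z.1 - z.2))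
          ≤ ENNReal.ofReal (M ^ (p - 1) * (|uf ε z.1 - uf ε z.2| * ν ε (z.1 - z.2))) := by
            apply ENNReal.ofReal_le_ofReal
            have h1' : |v z.1| ^ (p - 1) ≤ M ^ (p - 1) :=
              Real.rpow_le_rpow (abs_nonneg _) (hvM z.1) (by linarith)
            calc |v z.1| ^ (p - 1) * |uf ε z.1 - uf ε z.2| * ν ε (z.1 - z.2)
                ≤ M ^ (p - 1) * |uf ε z.1 - uf ε z.2| * ν ε (z.1 - z.2) :=
                  mul_le_mul_of_nonneg_right
                    (mul_le_mul_of_nonneg_right h1' (abs_nonneg _)) hn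
              _ = M ^ (p - 1) * (|uf ε z.1 - uf ε z.2| * ν ε (z.1 - z.2)) := by ring
        _ = ENNReal.ofReal (M ^ (p - 1)) * (ENNReal.ofReal |uf ε z.1 - uf ε z.2| *
            ENNReal.ofReal (ν ε (z.1 - z.2))) := by
            rw [ENNReal.ofReal_mul (Real.rpow_nonneg hM _),
              ENNReal.ofReal_mul (abs_nonneg _)]
  have case1 := core_aux hp hΩ huf hνm hC hCb hKc hδ' hT0 hTfin
    (show (0:ℝ) < p - 1 by linarith) (show p - 1 < p by linarith)
    (show (ENNReal.ofReal M) ≠ ⊤ from ENNReal.ofReal_ne_top) hfm1 hfb1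
  have case2 := core_aux hp hΩ huf hνm hC hCb hKc hδ' hT0 hTfin
    (show (0:ℝ) < 1 by norm_num) (show (1:ℝ) < p from hp)
    (show (ENNReal.ofReal (M ^ (p - 1))) ≠ ⊤ from ENNReal.ofReal_ne_top) hfm2 hfb2
  exact ⟨fun ε hε => ⟨case1.1 ε hε, case2.1 ε hε⟩, case1.2, case2.2⟩
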